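/- Let s ≥ 1, let y_1,…,y_s ∈ ℝ, let γ > 0 and λ ≥ 0, and let α ≥ 0. Then the optimal-partitioning recursion value Cost(y_{1:s}, α; γ) = min_{0 ≤ τ < s} { F(τ) + (1/2) Σ_{t=τ+1}^{s} (y_t − α γ^{t−s})² + λ } equals the minimum, over all integers k ≥ 0, all changepoint vectors 0 = τ_0 < τ_1 < … < τ_k < τ_{k+1} = s, and all amplitudes α_0,…,α_k ≥ 0 with α_k = α, of the constrained changepoint objective (1/2) Σ_{j=0}^{k} Σ_{t=τ_j+1}^{τ_{j+1}} (y_t − α_j γ^{t−τ_{j+1}})² + λk. -/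

import Mathlib

/-- Segment cost `D(a, b, α) = (1/2) ∑_{t=a+1}^{b} (y_t − α γ^{t−b})²`. -/
noncomputable def segCost (y : ℕ → ℝ) (γ : ℝ) (a b : ℕ) (α : ℝ) : ℝ :=
  (1/2) * ∑ t ∈ Finset.Icc (a+1) b, (y t - α * γ ^ ((t : ℤ) - (b : ℤ)))^2

/-- `τ` is a segmentation of the interval `{a+1,…,b}` with `k` changepoints:
`a = τ 0 < τ 1 < … < τ k < τ (k+1) = b`. -/
def IsSeg (a b k : ℕ) (τ : ℕ → ℕ) : Prop :=
  τ 0 = a ∧ τ (k+1) = b ∧ ∀ j ≤ k, τ j < τ (j+1)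

/-- Changepoint objective with per-segment amplitudes:
`∑_{j=0}^{k} D(τ_j, τ_{j+1}, α_j) + λ k`. -/
noncomputable def objAmp (y : ℕ → ℝ) (γ lam : ℝ) (k : ℕ) (τ : ℕ → ℕ) (α : ℕ → ℝ) : ℝ :=
  (∑ j ∈ Finset.range (k+1), segCost y γ (τ j) (τ (j+1)) (α j)) + lam * k

/-- `F(τ)`: the optimal cost of segmenting the first `τ` data points
(minimum of the changepoint objective over segmentations and nonnegative
amplitudes), with the convention `F(0) = −λ`. -/
noncomputable def Fval (y : ℕ → ℝ) (γ lam : ℝ) : ℕ → ℝ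
  | 0 => -lam
  | s+1 => sInf { c | ∃ (k : ℕ) (τ : ℕ → ℕ) (a : ℕ → ℝ), IsSeg 0 (s+1) k τ ∧
      (∀ j ≤ k, 0 ≤ a j) ∧ c = objAmp y γ lam k τ a }

/-- `Cost(y_{1:s}, α; γ) = min_{0 ≤ τ < s} { F(τ) + D(τ, s, α) + λ }`. -/
noncomputable def Cost (y : ℕ → ℝ) (γ lam : ℝ) (s : ℕ) (α : ℝ) : ℝ :=
  sInf { c | ∃ τ : ℕ, τ < s ∧ c = Fval y γ lam τ + segCost y γ τ s α + lam }

/-- Optimal segment cost `min_{α ≥ 0} D(a, b, α)`. -/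
noncomputable def segMin (y : ℕ → ℝ) (γ : ℝ) (a b : ℕ) : ℝ :=
  sInf { c | ∃ α : ℝ, 0 ≤ α ∧ c = segCost y γ a b α }

/-- Changepoint objective with each segment's amplitude optimized separately:
`∑_{j=0}^{k} min_{α ≥ 0} D(τ_j, τ_{j+1}, α) + λ k`. -/
noncomputable def objOpt (y : ℕ → ℝ) (γ lam : ℝ) (k : ℕ) (τ : ℕ → ℕ) : ℝ :=
  (∑ j ∈ Finset.range (k+1), segMin y γ (τ j) (τ (j+1))) + lam * k

lemma segCost_nonneg (y : ℕ → ℝ) (γ : ℝ) (a b : ℕ) (α : ℝ) : 0 ≤ segCost y γ a b α := by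
  unfold segCost
  have : 0 ≤ ∑ t ∈ Finset.Icc (a+1) b, (y t - α * γ ^ ((t : ℤ) - (b : ℤ)))^2 :=
    Finset.sum_nonneg fun t _ => sq_nonneg _
  linarith

lemma objAmp_nonneg (y : ℕ → ℝ) (γ lam : ℝ) (hlam : 0 ≤ lam) (k : ℕ) (τ : ℕ → ℕ) (a : ℕ → ℝ) :
    0 ≤ objAmp y γ lam k τ a := by
  unfold objAmp
  have h1 : 0 ≤ ∑ j ∈ Finset.range (k+1), segCost y γ (τ j) (τ (j+1)) (a j) :=
    Finset.sum_nonneg fun j _ => segCost_nonneg _ _ _ _ _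
  have h2 : 0 ≤ lam * (k : ℝ) := mul_nonneg hlam (Nat.cast_nonneg _)
  linarith

lemma triv_mem (y : ℕ → ℝ) (γ lam : ℝ) (b : ℕ) (hb : 1 ≤ b) (β : ℝ) (hβ : 0 ≤ β) :
    ∃ (k : ℕ) (τ : ℕ → ℕ) (a : ℕ → ℝ), IsSeg 0 b k τ ∧ (∀ j ≤ k, 0 ≤ a j) ∧ a k = β ∧
      objAmp y γ lam k τ a = objAmp y γ lam k τ a := by
  refine ⟨0, fun j => if j = 0 then 0 else b, fun _ => β, ⟨by simp, by simp, ?_⟩,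
    fun j _ => hβ, rfl, rfl⟩
  intro j hj
  interval_cases j
  simpa using (show 0 < b by omega)

lemma Fval_set_nonempty (y : ℕ → ℝ) (γ lam : ℝ) (t : ℕ) :
    { c | ∃ (k : ℕ) (τ : ℕ → ℕ) (a : ℕ → ℝ), IsSeg 0 (t+1) k τ ∧
      (∀ j ≤ k, 0 ≤ a j) ∧ c = objAmp y γ lam k τ a }.Nonempty := by
  obtain ⟨k, τ, a, h1, h2, _, _⟩ := triv_mem y γ lam (t+1) (by omega) 0 le_rfl
  exact ⟨objAmp y γ lam k τ a, k, τ, a, h1, h2, rfl⟩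

lemma Fval_nonneg (y : ℕ → ℝ) (γ lam : ℝ) (hlam : 0 ≤ lam) (t : ℕ) :
    0 ≤ Fval y γ lam (t+1) := by
  show 0 ≤ sInf _
  apply le_csInf (Fval_set_nonempty y γ lam t)
  rintro c ⟨k, τ, a, _, _, rfl⟩
  exact objAmp_nonneg y γ lam hlam k τ a

lemma neg_lam_le_Fval (y : ℕ → ℝ) (γ lam : ℝ) (hlam : 0 ≤ lam) (m : ℕ) :
    -lam ≤ Fval y γ lam m := by
  cases m with
  | zero => exact le_refl _
  | succ t => linarith [Fval_nonneg y γ lam hlam t]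

lemma Fval_le_objAmp (y : ℕ → ℝ) (γ lam : ℝ) (hlam : 0 ≤ lam) (m : ℕ) (hm : 1 ≤ m)
    (k : ℕ) (τ : ℕ → ℕ) (a : ℕ → ℝ) (hseg : IsSeg 0 m k τ) (ha : ∀ j ≤ k, 0 ≤ a j) :
    Fval y γ lam m ≤ objAmp y γ lam k τ a := by
  cases m with
  | zero => omega
  | succ t =>
    apply csInf_le
    · exact ⟨0, by rintro c ⟨k', τ', a', _, _, rfl⟩; exact objAmp_nonneg y γ lam hlam k' τ' a'⟩
    · exact ⟨k, τ, a, hseg, ha, rfl⟩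

lemma le_tau (b k : ℕ) (τ : ℕ → ℕ) (h : IsSeg 0 b k τ) : ∀ j ≤ k + 1, j ≤ τ j := by
  intro j
  induction j with
  | zero => omega
  | succ i ih =>
    intro hij
    have h1 := ih (by omega)
    have h2 := h.2.2 i (by omega)
    omega

lemma objAmp_succ (y : ℕ → ℝ) (γ lam : ℝ) (k : ℕ) (τ : ℕ → ℕ) (a : ℕ → ℝ) :
    objAmp y γ lam (k+1) τ a =
      objAmp y γ lam k τ a + segCost y γ (τ (k+1)) (τ (k+2)) (a (k+1)) + lam := by
  unfold objAmp
  rw [Finset.sum_range_succ]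
  push_cast
  ring

/-- For `s ≥ 1`, `γ > 0`, `λ ≥ 0`, and `α ≥ 0`, the recursion value
`Cost(y_{1:s}, α; γ)` equals the minimum of the changepoint objective over all
segmentations of `{1,…,s}` and nonnegative amplitudes whose last amplitude is `α`. -/
theorem cost_eq_constrained_changepoint (s : ℕ) (hs : 1 ≤ s) (y : ℕ → ℝ)
    (γ lam : ℝ) (hγ : 0 < γ) (hlam : 0 ≤ lam) (α : ℝ) (hα : 0 ≤ α) :
    Cost y γ lam s α =
      sInf { c | ∃ (k : ℕ) (τ : ℕ → ℕ) (a : ℕ → ℝ), IsSeg 0 s k τ ∧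
        (∀ j ≤ k, 0 ≤ a j) ∧ a k = α ∧ c = objAmp y γ lam k τ a } := by
  have hBne : { c | ∃ (k : ℕ) (τ : ℕ → ℕ) (a : ℕ → ℝ), IsSeg 0 s k τ ∧
      (∀ j ≤ k, 0 ≤ a j) ∧ a k = α ∧ c = objAmp y γ lam k τ a }.Nonempty := by
    obtain ⟨k, τ, a, h1, h2, h3, _⟩ := triv_mem y γ lam s hs α hα
    exact ⟨objAmp y γ lam k τ a, k, τ, a, h1, h2, h3, rfl⟩
  have hBbdd : BddBelow { c | ∃ (k : ℕ) (τ : ℕ → ℕ) (a : ℕ → ℝ), IsSeg 0 s k τ ∧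
      (∀ j ≤ k, 0 ≤ a j) ∧ a k = α ∧ c = objAmp y γ lam k τ a } :=
    ⟨0, by rintro c ⟨k, τ, a, _, _, _, rfl⟩; exact objAmp_nonneg y γ lam hlam k τ a⟩
  have hAbdd : BddBelow { c | ∃ τ : ℕ, τ < s ∧
      c = Fval y γ lam τ + segCost y γ τ s α + lam } := by
    refine ⟨0, ?_⟩
    rintro c ⟨t, ht, rfl⟩
    have := neg_lam_le_Fval y γ lam hlam t
    have := segCost_nonneg y γ t s α
    linarith
  apply le_antisymm
  · -- Cost ≤ sInf B
    apply le_csInf hBne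
    rintro c ⟨k, τ, a, hseg, ha, hak, rfl⟩
    cases k with
    | zero =>
      have h0 : τ 0 = 0 := hseg.1
      have h1 : τ 1 = s := hseg.2.1
      have : Fval y γ lam 0 + segCost y γ 0 s α + lam = objAmp y γ lam 0 τ a := by
        unfold objAmp
        simp [Fval, Finset.sum_range_one, h0, h1, hak]
      calc Cost y γ lam s α ≤ Fval y γ lam 0 + segCost y γ 0 s α + lam :=
            csInf_le hAbdd ⟨0, hs, rfl⟩
        _ = objAmp y γ lam 0 τ a := this
    | succ k' =>
      set m := τ (k' + 1) with hm
      have hm1 : 1 ≤ m := le_trans (by omega) (le_tau s (k'+1) τ hseg (k'+1) (by omega))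
      have hms : m < s := by
        have := hseg.2.2 (k'+1) le_rfl
        rw [hseg.2.1] at this
        omega
      have hsegm : IsSeg 0 m k' τ := ⟨hseg.1, rfl, fun j hj => hseg.2.2 j (by omega)⟩
      have hF : Fval y γ lam m ≤ objAmp y γ lam k' τ a :=
        Fval_le_objAmp y γ lam hlam m hm1 k' τ a hsegm (fun j hj => ha j (by omega))
      have hobj : objAmp y γ lam (k'+1) τ a =
          objAmp y γ lam k' τ a + segCost y γ m s α + lam := by
        rw [objAmp_succ, hak, ← hm, hseg.2.1]
      calc Cost y γ lam s α ≤ Fval y γ lam m + segCost y γ m s α + lam :=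
            csInf_le hAbdd ⟨m, hms, rfl⟩
        _ ≤ objAmp y γ lam (k'+1) τ a := by rw [hobj]; linarith
  · -- sInf B ≤ Cost
    unfold Cost
    have hAne : { c | ∃ τ : ℕ, τ < s ∧
        c = Fval y γ lam τ + segCost y γ τ s α + lam }.Nonempty :=
      ⟨Fval y γ lam 0 + segCost y γ 0 s α + lam, 0, hs, rfl⟩
    apply le_csInf hAne
    rintro c ⟨t, ht, rfl⟩
    cases t with
    | zero =>
      -- element k=0
      have hmem : segCost y γ 0 s α ∈ { c | ∃ (k : ℕ) (τ : ℕ → ℕ) (a : ℕ → ℝ),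
          IsSeg 0 s k τ ∧ (∀ j ≤ k, 0 ≤ a j) ∧ a k = α ∧ c = objAmp y γ lam k τ a } := by
        refine ⟨0, fun j => if j = 0 then 0 else s, fun _ => α,
          ⟨by simp, by simp, ?_⟩, fun j _ => hα, rfl, ?_⟩
        · intro j hj; interval_cases j; simpa using (show 0 < s by omega)
        · unfold objAmp
          simp [Finset.sum_range_one]
      have : Fval y γ lam 0 + segCost y γ 0 s α + lam = segCost y γ 0 s α := by
        simp [Fval]
      rw [this]
      exact csInf_le hBbdd hmem
    | succ m =>
      have key : ∀ c' ∈ { c | ∃ (k : ℕ) (τ : ℕ → ℕ) (a : ℕ → ℝ), IsSeg 0 (m+1) k τ ∧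
          (∀ j ≤ k, 0 ≤ a j) ∧ c = objAmp y γ lam k τ a },
          sInf { c | ∃ (k : ℕ) (τ : ℕ → ℕ) (a : ℕ → ℝ), IsSeg 0 s k τ ∧
            (∀ j ≤ k, 0 ≤ a j) ∧ a k = α ∧ c = objAmp y γ lam k τ a }
            ≤ c' + segCost y γ (m+1) s α + lam := by
        rintro c' ⟨k, τ, a, hseg, ha, rfl⟩
        set τe : ℕ → ℕ := fun j => if j = k+2 then s else τ j with hτe
        set ae : ℕ → ℝ := fun j => if j = k+1 then α else a j with hae
        have hsegE : IsSeg 0 s (k+1) τe := by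
          refine ⟨by simp [hτe, hseg.1], by simp [hτe], ?_⟩
          intro j hj
          rcases Nat.lt_or_ge j (k+1) with h | h
          · have e1 : τe j = τ j := by simp [hτe]; omega
            have e2 : τe (j+1) = τ (j+1) := by simp [hτe]; omega
            rw [e1, e2]; exact hseg.2.2 j (by omega)
          · have hj' : j = k+1 := by omega
            subst hj'
            have e1 : τe (k+1) = τ (k+1) := by simp [hτe]
            have e2 : τe (k+2) = s := by simp [hτe]
            rw [e1, e2, hseg.2.1]; omega
        have haE : ∀ j ≤ k+1, 0 ≤ ae j := by
          intro j hj
          by_cases h : j = k+1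
          · simp [hae, h, hα]
          · simp [hae, h]; exact ha j (by omega)
        have haEk : ae (k+1) = α := by simp [hae]
        have hsum : objAmp y γ lam (k+1) τe ae =
            objAmp y γ lam k τ a + segCost y γ (m+1) s α + lam := by
          rw [objAmp_succ]
          have e1 : τe (k+1) = m+1 := by simp [hτe]; exact hseg.2.1
          have e2 : τe (k+2) = s := by simp [hτe]
          have e3 : objAmp y γ lam k τe ae = objAmp y γ lam k τ a := by
            unfold objAmp
            congr 1
            apply Finset.sum_congr rfl
            intro j hj
            rw [Finset.mem_range] at hj
            have f1 : τe j = τ j := by simp [hτe]; omega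
            have f2 : τe (j+1) = τ (j+1) := by simp [hτe]; omega
            have f3 : ae j = a j := by simp [hae]; omega
            rw [f1, f2, f3]
          rw [e1, e2, e3, haEk]
        calc sInf _ ≤ objAmp y γ lam (k+1) τe ae :=
              csInf_le hBbdd ⟨k+1, τe, ae, hsegE, haE, haEk, rfl⟩
          _ = objAmp y γ lam k τ a + segCost y γ (m+1) s α + lam := hsum
      have hCne := Fval_set_nonempty y γ lam m
      have : sInf { c | ∃ (k : ℕ) (τ : ℕ → ℕ) (a : ℕ → ℝ), IsSeg 0 s k τ ∧
            (∀ j ≤ k, 0 ≤ a j) ∧ a k = α ∧ c = objAmp y γ lam k τ a }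
            - (segCost y γ (m+1) s α + lam) ≤ Fval y γ lam (m+1) := by
        show _ ≤ sInf _
        apply le_csInf hCne
        intro c' hc'
        have := key c' hc'
        linarith
      linarith
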